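/- Let k ≥ 1, let π be a fixed k-cycle in S_k, and let j₁, j₂ ≥ 2 be integers. Then there is NO triple (σ₁,σ₂,f) where: σ₁, σ₂ are permutations of {1,…,k} with σ₁σ₂ = π; σ₂ has exactly two orbits; σ₁ has exactly j₁+j₂−2 orbits; f is a bijection from the set of orbits of σ₂ to {1,2}; and for each orbit d of σ₂, the number of orbits of σ₁ intersecting d nontrivially is at most j_{f(d)} − 1. (This is the vanishing of the fourth term in the inclusion–exclusion argument in the proof of the combinatorial formula for the quadratic coefficients of Kerov polynomials.) -/

import Mathlib

open Equiv

/-- The orbit of `x` under the permutation `σ`. -/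
def permOrbit {k : ℕ} (σ : Equiv.Perm (Fin k)) (x : Fin k) : Set (Fin k) :=
  {y | ∃ n : ℤ, (σ ^ n) x = y}

/-- The set of orbits of a permutation (fixed points count as singleton orbits). -/
def permOrbits {k : ℕ} (σ : Equiv.Perm (Fin k)) : Set (Set (Fin k)) :=
  Set.range (permOrbit σ)

/-- `κ(σ)`: the number of orbits (cycles, counting fixed points) of `σ`. -/
noncomputable def kappa {k : ℕ} (σ : Equiv.Perm (Fin k)) : ℕ :=
  Nat.card (permOrbits σ)
/-- A full cycle: a permutation of `{1,…,k}` with a single orbit, namely everything. -/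
def IsFullCycle {k : ℕ} (σ : Equiv.Perm (Fin k)) : Prop :=
  ∀ x y : Fin k, ∃ n : ℤ, (σ ^ n) x = y

/-- The number of orbits of `σ₁` which intersect the set `d` nontrivially. -/
noncomputable def numMeeting {k : ℕ} (σ₁ : Equiv.Perm (Fin k)) (d : Set (Fin k)) : ℕ :=
  {c ∈ permOrbits σ₁ | (c ∩ d).Nonempty}.ncard

lemma mem_permOrbit_self {k : ℕ} (σ : Perm (Fin k)) (x : Fin k) : x ∈ permOrbit σ x :=
  ⟨0, rfl⟩

lemma permOrbit_eq_of_mem {k : ℕ} {σ : Perm (Fin k)} {x y : Fin k}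
    (h : y ∈ permOrbit σ x) : permOrbit σ y = permOrbit σ x := by
  obtain ⟨n, rfl⟩ := h
  ext z
  constructor
  · rintro ⟨m, rfl⟩
    exact ⟨m + n, by rw [zpow_add]; rfl⟩
  · rintro ⟨m, rfl⟩
    refine ⟨m - n, ?_⟩
    rw [← Equiv.Perm.mul_apply, ← zpow_add, sub_add_cancel]

lemma apply_mem_permOrbit {k : ℕ} {σ : Perm (Fin k)} {x y : Fin k}
    (h : y ∈ permOrbit σ x) : σ y ∈ permOrbit σ x := by
  obtain ⟨n, rfl⟩ := h
  exact ⟨1 + n, by rw [zpow_one_add]; rfl⟩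

lemma inv_apply_mem_permOrbit {k : ℕ} {σ : Perm (Fin k)} {x y : Fin k}
    (h : y ∈ permOrbit σ x) : σ⁻¹ y ∈ permOrbit σ x := by
  obtain ⟨n, rfl⟩ := h
  exact ⟨-1 + n, by rw [zpow_add, zpow_neg_one]; rfl⟩

/-- There is no triple `(σ₁, σ₂, f)` with `σ₁σ₂ = π` a `k`-cycle, `σ₂` having exactly
two orbits, `σ₁` having exactly `j₁ + j₂ - 2` orbits, `f` a bijective labeling of the
two orbits of `σ₂` by `{1,2}` (here `Fin 2`, with `0` standing for the label `1`),
such that for each orbit `d` of `σ₂` at most `j_{f(d)} - 1` orbits of `σ₁`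
intersect `d` nontrivially. -/
theorem no_triple_with_small_meetings (k : ℕ) (hk : 1 ≤ k) (π : Equiv.Perm (Fin k))
    (hπ : IsFullCycle π) (j₁ j₂ : ℕ) (hj₁ : 2 ≤ j₁) (hj₂ : 2 ≤ j₂) :
    ¬ ∃ (σ₁ σ₂ : Equiv.Perm (Fin k)) (f : ↥(permOrbits σ₂) → Fin 2),
        σ₁ * σ₂ = π ∧ kappa σ₂ = 2 ∧ kappa σ₁ = j₁ + j₂ - 2 ∧
        Function.Bijective f ∧
        ∀ d : ↥(permOrbits σ₂),
          numMeeting σ₁ (d : Set (Fin k)) ≤ (if f d = 0 then j₁ else j₂) - 1 := by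
  rintro ⟨σ₁, σ₂, f, hprod, hκ₂, hκ₁, hfbij, hmeet⟩
  -- the two orbits of σ₂
  obtain ⟨D0, hD0⟩ := hfbij.2 0
  obtain ⟨D1, hD1⟩ := hfbij.2 1
  set d0 : Set (Fin k) := (D0 : Set (Fin k)) with hd0def
  set d1 : Set (Fin k) := (D1 : Set (Fin k)) with hd1def
  -- every σ₂-orbit is d0 or d1
  have horb : ∀ x : Fin k, permOrbit σ₂ x = d0 ∨ permOrbit σ₂ x = d1 := by
    intro x
    have hmem : permOrbit σ₂ x ∈ permOrbits σ₂ := ⟨x, rfl⟩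
    set D : ↥(permOrbits σ₂) := ⟨permOrbit σ₂ x, hmem⟩
    have : f D = 0 ∨ f D = 1 := by omega
    rcases this with h | h
    · left
      have : D = D0 := hfbij.1 (by rw [h, hD0])
      exact congrArg Subtype.val this
    · right
      have : D = D1 := hfbij.1 (by rw [h, hD1])
      exact congrArg Subtype.val this
  have hd0d1 : D0 ≠ D1 := by
    intro h; rw [h, hD1] at hD0; exact absurd hD0 (by decide)
  have hne : d0 ≠ d1 := fun h => hd0d1 (Subtype.ext h)
  -- d0 and d1 cover everything
  have hcover : ∀ x : Fin k, x ∈ d0 ∨ x ∈ d1 := by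
    intro x
    rcases horb x with h | h
    · left; rw [← h]; exact mem_permOrbit_self σ₂ x
    · right; rw [← h]; exact mem_permOrbit_self σ₂ x
  -- d0 and d1 are disjoint
  have hdisj : d0 ∩ d1 = ∅ := by
    by_contra h
    obtain ⟨z, hz0, hz1⟩ := Set.nonempty_iff_ne_empty.2 h
    rcases horb z with h' | h'
    · -- permOrbit σ₂ z = d0; but z ∈ d1, and d1 is an orbit
      obtain ⟨w, hw⟩ := D1.2
      have : permOrbit σ₂ z = d1 := by
        rw [hd1def, ← hw]; exact permOrbit_eq_of_mem (by rw [hw]; exact hz1)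
      exact hne (h' ▸ this)
    · obtain ⟨w, hw⟩ := D0.2
      have : permOrbit σ₂ z = d0 := by
        rw [hd0def, ← hw]; exact permOrbit_eq_of_mem (by rw [hw]; exact hz0)
      exact hne (this ▸ h')
  -- orbit membership is preserved: permOrbit σ₂ x = d0 for x ∈ d0
  have horbeq : ∀ x : Fin k, x ∈ d0 → permOrbit σ₂ x = d0 := by
    intro x hx
    rcases horb x with h | h
    · exact h
    · exfalso
      have : x ∈ d0 ∩ d1 := ⟨hx, by rw [← h]; exact mem_permOrbit_self σ₂ x⟩
      rw [hdisj] at this; exact this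
  -- counting argument
  set A := {c ∈ permOrbits σ₁ | (c ∩ d0).Nonempty} with hA
  set B := {c ∈ permOrbits σ₁ | (c ∩ d1).Nonempty} with hB
  have hAle : A.ncard ≤ j₁ - 1 := by
    have := hmeet D0
    rwa [hD0, if_pos rfl] at this
  have hBle : B.ncard ≤ j₂ - 1 := by
    have := hmeet D1
    rwa [hD1, if_neg (by decide)] at this
  have hUnion : A ∪ B = permOrbits σ₁ := by
    apply Set.eq_of_subset_of_subset
    · rintro c (⟨hc, _⟩ | ⟨hc, _⟩) <;> exact hc
    · rintro c hc
      obtain ⟨x, rfl⟩ := hc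
      rcases hcover x with h | h
      · exact Or.inl ⟨⟨x, rfl⟩, ⟨x, mem_permOrbit_self σ₁ x, h⟩⟩
      · exact Or.inr ⟨⟨x, rfl⟩, ⟨x, mem_permOrbit_self σ₁ x, h⟩⟩
  have hκ₁' : (permOrbits σ₁).ncard = j₁ + j₂ - 2 := by
    rw [← hκ₁]; exact (Nat.card_coe_set_eq _).symm
  have hfin : ∀ s : Set (Set (Fin k)), s.Finite := fun s => Set.toFinite s
  have hcount : A.ncard + B.ncard = (A ∪ B).ncard + (A ∩ B).ncard :=
    (Set.ncard_union_add_ncard_inter A B (hfin A) (hfin B)).symm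
  have hABempty : A ∩ B = ∅ := by
    rw [hUnion, hκ₁'] at hcount
    have : (A ∩ B).ncard = 0 := by omega
    exact (Set.ncard_eq_zero (hfin _)).1 this
  -- each σ₁-orbit is contained in d0 or d1
  have hsub : ∀ x : Fin k, permOrbit σ₁ x ⊆ d0 ∨ permOrbit σ₁ x ⊆ d1 := by
    intro x
    have hmemA_or : permOrbit σ₁ x ∈ A ∨ permOrbit σ₁ x ∈ B := by
      rw [← Set.mem_union, hUnion]; exact ⟨x, rfl⟩
    have hnotboth : ¬ (permOrbit σ₁ x ∈ A ∧ permOrbit σ₁ x ∈ B) := by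
      rintro ⟨h1, h2⟩
      have : permOrbit σ₁ x ∈ A ∩ B := ⟨h1, h2⟩
      rw [hABempty] at this; exact this
    rcases hmemA_or with h | h
    · left
      intro y hy
      rcases hcover y with h' | h'
      · exact h'
      · exfalso
        exact hnotboth ⟨h, ⟨x, rfl⟩, ⟨y, hy, h'⟩⟩
    · right
      intro y hy
      rcases hcover y with h' | h'
      · exfalso
        exact hnotboth ⟨⟨⟨x, rfl⟩, ⟨y, hy, h'⟩⟩, h⟩
      · exact h'
  -- π and π⁻¹ preserve d0
  have hσ₁0 : ∀ y, y ∈ d0 → σ₁ y ∈ d0 ∧ σ₁⁻¹ y ∈ d0 := by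
    intro y hy
    rcases hsub y with h | h
    · exact ⟨h (apply_mem_permOrbit (mem_permOrbit_self σ₁ y)),
        h (inv_apply_mem_permOrbit (mem_permOrbit_self σ₁ y))⟩
    · exfalso
      have : y ∈ d0 ∩ d1 := ⟨hy, h (mem_permOrbit_self σ₁ y)⟩
      rw [hdisj] at this; exact this
  have hσ₂0 : ∀ y, y ∈ d0 → σ₂ y ∈ d0 ∧ σ₂⁻¹ y ∈ d0 := by
    intro y hy
    have h := horbeq y hy
    exact ⟨h ▸ apply_mem_permOrbit (mem_permOrbit_self σ₂ y),
      h ▸ inv_apply_mem_permOrbit (mem_permOrbit_self σ₂ y)⟩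
  have hπ0 : ∀ y, y ∈ d0 → π y ∈ d0 := by
    intro y hy
    rw [← hprod]
    exact (hσ₁0 _ (hσ₂0 y hy).1).1
  have hπ0' : ∀ y, y ∈ d0 → π⁻¹ y ∈ d0 := by
    intro y hy
    rw [← hprod, mul_inv_rev]
    exact (hσ₂0 _ (hσ₁0 y hy).2).2
  have hπn : ∀ n : ℤ, ∀ y ∈ d0, (π ^ n) y ∈ d0 := by
    intro n
    induction n using Int.induction_on with
    | zero => intro y hy; simpa using hy
    | succ m ih =>
      intro y hy
      have heq : (π ^ ((m : ℤ) + 1)) y = π ((π ^ (m : ℤ)) y) := by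
        rw [add_comm, zpow_one_add]; rfl
      rw [heq]
      exact hπ0 _ (ih y hy)
    | pred m ih =>
      intro y hy
      have heq : (π ^ (-(m : ℤ) - 1)) y = π⁻¹ ((π ^ (-(m : ℤ))) y) := by
        rw [show -(m : ℤ) - 1 = -1 + -(m : ℤ) by ring, zpow_add, zpow_neg_one]; rfl
      rw [heq]
      exact hπ0' _ (ih y hy)
  -- get the contradiction with fullness of π
  obtain ⟨x0, hx0⟩ : d0.Nonempty := by
    obtain ⟨w, hw⟩ := D0.2
    exact ⟨w, by rw [hd0def, ← hw]; exact mem_permOrbit_self σ₂ w⟩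
  obtain ⟨x1, hx1⟩ : d1.Nonempty := by
    obtain ⟨w, hw⟩ := D1.2
    exact ⟨w, by rw [hd1def, ← hw]; exact mem_permOrbit_self σ₂ w⟩
  obtain ⟨n, hn⟩ := hπ x0 x1
  have : x1 ∈ d0 := hn ▸ hπn n x0 hx0
  have : x1 ∈ d0 ∩ d1 := ⟨this, hx1⟩
  rw [hdisj] at this; exact this
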